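/- Let p > 1 and let U₊ solve -u'' = xu - u^{p+1} on [0,∞), U₊(0)=0, 0 < U₊(x) < x^{1/p} for x > 0, with U₊' > 0 and x^{-1/p} U₊(x) → 1 as x → ∞. Then U₊(x) - x^{1/p} = O(x^{(1-3p)/p}) as x → ∞. -/

import Mathlib

open Filter Set

lemma secondDerivTest {g : ℝ → ℝ} {x₀ : ℝ} (hg : ContDiffAt ℝ 2 g x₀)
    (hmin : IsLocalMin g x₀) : 0 ≤ deriv (deriv g) x₀ := by
  by_contra hneg
  push_neg at hneg
  obtain ⟨u, hu, hgu⟩ := hg.contDiffOn (m := 2) le_rfl (by simp)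
  obtain ⟨ε, hε, hball⟩ := Metric.mem_nhds_iff.mp hu
  have hgball : ContDiffOn ℝ 2 g (Metric.ball x₀ ε) := hgu.mono hball
  rw [show (2 : WithTop ℕ∞) = 1 + 1 from rfl] at hgball
  obtain ⟨hdiff, -, hcd1⟩ := (contDiffOn_succ_iff_deriv_of_isOpen Metric.isOpen_ball).mp hgball
  have hmem : x₀ ∈ Metric.ball x₀ ε := Metric.mem_ball_self hε
  have hdg : HasDerivAt (deriv g) (deriv (deriv g) x₀) x₀ :=
    (((hcd1.differentiableOn one_ne_zero) x₀ hmem).differentiableAt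
      (Metric.isOpen_ball.mem_nhds hmem)).hasDerivAt
  -- deriv g x₀ = 0
  have hz : deriv g x₀ = 0 := hmin.deriv_eq_zero
  -- slope of deriv g tends to a negative number, so deriv g < 0 just right of x₀
  have hslope := hasDerivAt_iff_tendsto_slope.mp hdg
  have hslope' : Tendsto (slope (deriv g) x₀) (nhdsWithin x₀ (Ioi x₀)) (nhds (deriv (deriv g) x₀)) :=
    hslope.mono_left (nhdsWithin_mono _ (fun y hy => ne_of_gt hy))
  have hev : ∀ᶠ y in nhdsWithin x₀ (Ioi x₀), slope (deriv g) x₀ y < 0 :=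
    hslope'.eventually_lt_const hneg
  have hev2 : ∀ᶠ y in nhdsWithin x₀ (Ioi x₀), deriv g y < 0 := by
    filter_upwards [hev, self_mem_nhdsWithin] with y hy hy'
    rw [slope_def_field, hz, sub_zero, div_neg_iff] at hy
    rcases hy with ⟨h1, h2⟩ | ⟨h1, h2⟩
    · linarith [mem_Ioi.mp hy']
    · exact h1
  have hev3 : ∀ᶠ y in nhdsWithin x₀ (Ioi x₀), y ∈ Metric.ball x₀ ε := by
    refine eventually_nhdsWithin_of_eventually_nhds ?_
    exact Metric.isOpen_ball.eventually_mem hmem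
  obtain ⟨b, hb, hIoo⟩ := mem_nhdsGT_iff_exists_Ioo_subset.mp ((hev2.and hev3).and
    (hmin.filter_mono (nhdsWithin_le_nhds)))
  -- pick midpoint
  set y := (x₀ + b) / 2 with hy
  have hy1 : y ∈ Ioo x₀ b := by constructor <;> [skip; skip] <;> simp [hy] <;> linarith [mem_Ioi.mp hb]
  have hanti : StrictAntiOn g (Icc x₀ y) := by
    apply strictAntiOn_of_deriv_neg (convex_Icc _ _)
    · have : Icc x₀ y ⊆ Metric.ball x₀ ε := by
        intro z hz'
        rcases eq_or_lt_of_le hz'.1 with h | h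
        · exact h ▸ hmem
        · exact ((hIoo ⟨h, lt_of_le_of_lt hz'.2 hy1.2⟩).1).2
      exact (hgball.continuousOn).mono this
    · intro z hz'
      rw [interior_Icc] at hz'
      exact ((hIoo ⟨hz'.1, lt_trans hz'.2 hy1.2⟩).1).1
  have h1 : g y < g x₀ := hanti (left_mem_Icc.mpr (le_of_lt hy1.1)) (right_mem_Icc.mpr (le_of_lt hy1.1)) hy1.1
  have h2 : g x₀ ≤ g y := (hIoo hy1).2
  linarith
open Filter Set

lemma rpow_mvt_lower {p u s : ℝ} (hp : 1 < p) (hu : 0 < u) (hus : u < s) :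
    p * u ^ (p - 1) * (s - u) ≤ s ^ p - u ^ p := by
  have hcont : ContinuousOn (fun t : ℝ => t ^ p) (Icc u s) := fun t ht =>
    (Real.continuousAt_rpow_const t p (Or.inl (ne_of_gt (lt_of_lt_of_le hu ht.1)))).continuousWithinAt
  have hderiv : ∀ t ∈ Ioo u s, HasDerivAt (fun t : ℝ => t ^ p) (p * t ^ (p - 1)) t :=
    fun t ht => Real.hasDerivAt_rpow_const (Or.inl (ne_of_gt (lt_trans hu ht.1)))
  obtain ⟨ξ, hξ, heq⟩ := exists_hasDerivAt_eq_slope (fun t : ℝ => t ^ p)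
    (fun t => p * t ^ (p - 1)) hus hcont hderiv
  have h1 : u ^ (p - 1) ≤ ξ ^ (p - 1) :=
    Real.rpow_le_rpow (le_of_lt hu) (le_of_lt hξ.1) (by linarith)
  have hsu : (0:ℝ) < s - u := sub_pos.mpr hus
  have h3 : p * ξ ^ (p - 1) * (s - u) = s ^ p - u ^ p := by
    rw [heq]; field_simp
  have h4 := mul_le_mul_of_nonneg_right (mul_le_mul_of_nonneg_left h1 (by linarith : (0:ℝ) ≤ p)) hsu.le
  linarith

lemma qineq (p : ℝ) (hp : 1 < p) (U : ℝ → ℝ)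
    (hb : ∀ x > (0:ℝ), 0 < U x ∧ U x < x ^ (1 / p))
    (hlim : Tendsto (fun x => U x / x ^ (1 / p)) atTop (nhds 1)) :
    ∃ L₁ : ℝ, 1 ≤ L₁ ∧ ∀ x ≥ L₁, U x * (U x ^ p - x) ≤ x * (U x - x ^ (1 / p)) := by
  have hp0 : (0:ℝ) < p := by linarith
  set a : ℝ := 1 / p with ha
  have ha0 : 0 < a := by positivity
  set t : ℝ := p ^ (-a) with htdef
  have ht0 : 0 < t := Real.rpow_pos_of_pos hp0 _
  have ht1 : t < 1 := Real.rpow_lt_one_of_one_lt_of_neg hp (by linarith)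
  have hev : ∀ᶠ x in atTop, t ≤ U x / x ^ a := hlim.eventually_const_le ht1
  obtain ⟨L₀, hL₀⟩ := eventually_atTop.mp hev
  refine ⟨max L₀ 1, le_max_right _ _, fun x hx => ?_⟩
  have hx1 : (1:ℝ) ≤ x := le_trans (le_max_right _ _) hx
  have hx0 : (0:ℝ) < x := by linarith
  obtain ⟨hU0, hUlt⟩ := hb x hx0
  have hxa0 : 0 < x ^ a := Real.rpow_pos_of_pos hx0 a
  have htx : t * x ^ a ≤ U x := by
    have := hL₀ x (le_trans (le_max_left _ _) hx)
    calc t * x ^ a ≤ (U x / x ^ a) * x ^ a := by nlinarith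
    _ = U x := by field_simp
  have hap : a * p = 1 := by rw [ha, one_div, inv_mul_cancel₀ (ne_of_gt hp0)]
  have hxap : (x ^ a) ^ p = x := by
    rw [← Real.rpow_mul (le_of_lt hx0), hap, Real.rpow_one]
  have hUp : x / p ≤ U x ^ p := by
    have h1 : (t * x ^ a) ^ p ≤ U x ^ p :=
      Real.rpow_le_rpow (by positivity) htx (le_of_lt hp0)
    have h2 : (t * x ^ a) ^ p = t ^ p * x := by
      rw [Real.mul_rpow (le_of_lt ht0) (le_of_lt hxa0), hxap]
    have h3 : t ^ p = 1 / p := by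
      rw [htdef, ← Real.rpow_mul (le_of_lt hp0)]
      rw [show -a * p = -1 by rw [neg_mul, hap], Real.rpow_neg_one]
      exact (one_div p).symm
    rw [h2, h3] at h1
    calc x / p = (1/p) * x := by ring
    _ ≤ U x ^ p := h1
  -- MVT inequality
  have hmvt := rpow_mvt_lower hp hU0 hUlt
  rw [hxap] at hmvt
  -- U x * U x ^ (p-1) = U x ^ p
  have hUU : U x * U x ^ (p - 1) = U x ^ p := by
    rw [← Real.rpow_one_add' (le_of_lt hU0) (by intro h; linarith)]
    ring_nf
  -- multiply hmvt by U x
  have h5 : U x * (p * U x ^ (p-1) * (x ^ a - U x)) ≤ U x * (x - U x ^ p) :=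
    mul_le_mul_of_nonneg_left hmvt (le_of_lt hU0)
  have h6 : U x * (p * U x ^ (p-1) * (x ^ a - U x)) = p * U x ^ p * (x ^ a - U x) := by
    rw [← hUU]; ring
  have h7 : x * (x ^ a - U x) ≤ p * U x ^ p * (x ^ a - U x) := by
    have : x ≤ p * U x ^ p := by
      have := mul_le_mul_of_nonneg_left hUp (le_of_lt hp0)
      calc x = p * (x / p) := by field_simp
      _ ≤ p * U x ^ p := this
    nlinarith [le_of_lt hUlt]
  nlinarith [h5, h6, h7]

lemma deriv2_g (U : ℝ → ℝ) (hU1 : Differentiable ℝ U) (hU2 : Differentiable ℝ (deriv U))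
    (M b r s : ℝ) {x₀ : ℝ} (hx₀ : 0 < x₀) :
    deriv (deriv (fun x => U x + M * x ^ r + b * x ^ s)) x₀ =
      deriv (deriv U) x₀ + M * (r * ((r - 1) * x₀ ^ (r - 2))) + b * (s * ((s - 1) * x₀ ^ (s - 2))) := by
  have hEq : ∀ x ∈ Ioi (0:ℝ), deriv (fun x => U x + M * x ^ r + b * x ^ s) x
      = deriv U x + M * (r * x ^ (r - 1)) + b * (s * x ^ (s - 1)) := by
    intro x hx
    exact ((((hU1 x).hasDerivAt).add
      ((Real.hasDerivAt_rpow_const (Or.inl (ne_of_gt hx))).const_mul M)).add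
      ((Real.hasDerivAt_rpow_const (Or.inl (ne_of_gt hx))).const_mul b)).deriv
  have hEE : deriv (fun x => U x + M * x ^ r + b * x ^ s)
      =ᶠ[nhds x₀] fun x => deriv U x + M * (r * x ^ (r - 1)) + b * (s * x ^ (s - 1)) := by
    filter_upwards [Ioi_mem_nhds hx₀] with x hx using hEq x hx
  rw [hEE.deriv_eq]
  have h := (((hU2 x₀).hasDerivAt).add
    (((Real.hasDerivAt_rpow_const (p := r - 1) (Or.inl (ne_of_gt hx₀))).const_mul r).const_mul M)).add
    (((Real.hasDerivAt_rpow_const (p := s - 1) (Or.inl (ne_of_gt hx₀))).const_mul s).const_mul b)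
    |>.deriv
  rw [show r - 1 - 1 = r - 2 by ring, show s - 1 - 1 = s - 2 by ring] at h
  exact h

lemma arith_core {c K M δ A2 A5 X3 D : ℝ} (hc : c < 0) (hK : 0 < K) (hMc : 2 * (-c) ≤ M)
    (hδ0 : 0 < δ) (hδ1 : δ < 1) (hA5 : 0 < A5) (hA2 : 0 < A2)
    (hsplit : A2 = A5 * X3) (hcube : 2 * K ≤ X3)
    (hstep : D < -(M * A2)) :
    D + M * K * A5 + ((δ - 1) * c) * A2 < 0 := by
  have h1 : (δ - 1) * c ≤ -c := by nlinarith
  have h2 : ((δ - 1) * c) * A2 ≤ (-c) * A2 := mul_le_mul_of_nonneg_right h1 hA2.le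
  have h3 : M * K ≤ (M + c) * X3 := by nlinarith
  have h4 : M * K * A5 ≤ (M + c) * X3 * A5 := mul_le_mul_of_nonneg_right h3 hA5.le
  have h5 : (M + c) * X3 * A5 = (M + c) * A2 := by rw [hsplit]; ring
  nlinarith
set_option maxHeartbeats 1000000 in
theorem stmt7 (p : ℝ) (hp : 1 < p) (U : ℝ → ℝ) (hU : ContDiff ℝ 2 U)
    (heq : ∀ x ≥ (0:ℝ), -(deriv (deriv U) x) = x * U x - U x ^ (p + 1))
    (h0 : U 0 = 0) (hb : ∀ x > (0:ℝ), 0 < U x ∧ U x < x ^ (1 / p))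
    (hd : ∀ x ≥ (0:ℝ), 0 < deriv U x)
    (hlim : Tendsto (fun x => U x / x ^ (1 / p)) atTop (nhds 1)) :
    ∃ C > (0:ℝ), ∃ X : ℝ, ∀ x ≥ X, |U x - x ^ (1 / p)| ≤ C * x ^ ((1 - 3 * p) / p) := by
  have hp0 : (0:ℝ) < p := by linarith
  set a : ℝ := 1 / p with ha
  have ha0 : 0 < a := by positivity
  have ha1 : a < 1 := by rw [ha, div_lt_one hp0]; exact hp
  -- differentiability of U and deriv U
  have hU' : ContDiff ℝ (1 + 1) U := by rw [show ((1:WithTop ℕ∞) + 1) = 2 from rfl]; exact hU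
  obtain ⟨hU1, -, hUd1⟩ := contDiff_succ_iff_deriv.mp hU'
  have hU2 : Differentiable ℝ (deriv U) := hUd1.differentiable one_ne_zero
  -- constants
  set K : ℝ := (a - 3) * (a - 4) with hKdef
  have hK : 0 < K := by nlinarith
  clear_value K
  set c : ℝ := a * (a - 1) with hcdef
  have hc : c < 0 := by nlinarith
  clear_value c
  obtain ⟨L₁, hL₁1, hq⟩ := qineq p hp U hb hlim
  rw [show (1:ℝ)/p = a from ha.symm] at hq
  clear_value a
  set L : ℝ := max L₁ (max 1 (2 * K)) with hLdef
  have hL1 : (1:ℝ) ≤ L := le_trans (le_max_left _ _) (le_max_right _ _)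
  have hL0 : (0:ℝ) < L := by linarith
  have hLK : 2 * K ≤ L := le_trans (le_max_right _ _) (le_max_right _ _)
  have hLL₁ : L₁ ≤ L := le_max_left _ _
  clear_value L
  set M : ℝ := max (2 * (1 - c)) ((L ^ a - U L) * L ^ (3 - a) + 1) with hMdef
  have hM0 : 0 < M := lt_of_lt_of_le (by nlinarith) (le_max_left _ _)
  have hMc : 2 * (-c) ≤ M := le_trans (by nlinarith) (le_max_left _ _)
  have hML : (L ^ a - U L) * L ^ (3 - a) + 1 ≤ M := le_max_right _ _
  clear_value M
  -- barrier claim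
  have key : ∀ δ : ℝ, 0 < δ → δ < 1 → ∀ x, L ≤ x →
      0 ≤ U x + M * x ^ (a - 3) + (δ - 1) * x ^ a := by
    intro δ hδ0 hδ1 
    set g : ℝ → ℝ := fun x => U x + M * x ^ (a - 3) + (δ - 1) * x ^ a with hgdef
    show ∀ x, L ≤ x → 0 ≤ g x
    -- g is nonneg at L
    have hgL : 0 ≤ g L := by
      have e1 : L ^ (3 - a) * L ^ (a - 3) = 1 := by
        rw [← Real.rpow_add hL0, show 3 - a + (a - 3) = 0 by ring, Real.rpow_zero]
      have e2 : 0 < L ^ (a - 3) := Real.rpow_pos_of_pos hL0 _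
      have e3 : ((L ^ a - U L) * L ^ (3 - a) + 1) * L ^ (a - 3) ≤ M * L ^ (a - 3) :=
        mul_le_mul_of_nonneg_right hML (le_of_lt e2)
      have e4 : ((L ^ a - U L) * L ^ (3 - a) + 1) * L ^ (a - 3)
          = (L ^ a - U L) * (L ^ (3 - a) * L ^ (a - 3)) + L ^ (a - 3) := by ring
      rw [e4, e1] at e3
      have e5 : 0 < L ^ a := Real.rpow_pos_of_pos hL0 _
      have e6 : (δ - 1) * L ^ a = δ * L ^ a - L ^ a := by ring
      simp only [hgdef]
      linarith [mul_nonneg hδ0.le e5.le]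
    -- g is nonneg for large x
    have hR : ∃ R, L ≤ R ∧ ∀ x, R ≤ x → 0 ≤ g x := by
      have hev : ∀ᶠ x in atTop, 1 - δ ≤ U x / x ^ a := hlim.eventually_const_le (by linarith)
      obtain ⟨R₀, hR₀⟩ := eventually_atTop.mp hev
      refine ⟨max R₀ L, le_max_right _ _, fun x hx => ?_⟩
      have hx0 : 0 < x := lt_of_lt_of_le hL0 (le_trans (le_max_right _ _) hx)
      have hxa : 0 < x ^ a := Real.rpow_pos_of_pos hx0 _
      have h1 := hR₀ x (le_trans (le_max_left _ _) hx)
      have h2 : (1 - δ) * x ^ a ≤ U x := by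
        calc (1 - δ) * x ^ a ≤ (U x / x ^ a) * x ^ a :=
          mul_le_mul_of_nonneg_right h1 hxa.le
        _ = U x := by field_simp
      have h3 : 0 < M * x ^ (a - 3) := by positivity
      have h4 : (δ - 1) * x ^ a = -((1 - δ) * x ^ a) := by ring
      simp only [hgdef]
      linarith
    obtain ⟨R, hLR, hgR⟩ := hR
    -- no negative point in [L, R]
    have hnoneg : ∀ x ∈ Icc L R, 0 ≤ g x := by
      by_contra hcon
      push_neg at hcon
      obtain ⟨x₁, hx₁, hgx₁⟩ := hcon
      have hconts : ContinuousOn g (Icc L R) := by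
        intro x hx
        have hx0 : (0:ℝ) < x := lt_of_lt_of_le hL0 hx.1
        exact (((hU1.continuous.continuousAt).add
          ((continuousAt_const).mul (Real.continuousAt_rpow_const x _ (Or.inl (ne_of_gt hx0))))).add
          ((continuousAt_const).mul (Real.continuousAt_rpow_const x _ (Or.inl (ne_of_gt hx0))))).continuousWithinAt
      obtain ⟨x₀, hx₀mem, hx₀min⟩ := (isCompact_Icc).exists_isMinOn
        (nonempty_Icc.mpr (le_trans hLR le_rfl)) hconts
      have hgx₀ : g x₀ < 0 := lt_of_le_of_lt (hx₀min hx₁) hgx₁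
      have hx₀L : L < x₀ := by
        rcases eq_or_lt_of_le hx₀mem.1 with h | h
        · exact absurd (h ▸ hgx₀) (not_lt.mpr hgL)
        · exact h
      have hx₀R : x₀ < R := by
        rcases eq_or_lt_of_le hx₀mem.2 with h | h
        · exact absurd (h ▸ hgx₀) (not_lt.mpr (hgR R le_rfl))
        · exact h
      have hx₀0 : (0:ℝ) < x₀ := lt_of_lt_of_le hL0 (le_of_lt hx₀L)
      have hx₀1 : (1:ℝ) ≤ x₀ := le_trans hL1 (le_of_lt hx₀L)
      have hlocmin : IsLocalMin g x₀ := hx₀min.isLocalMin (Icc_mem_nhds hx₀L hx₀R)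
      have hcd : ContDiffAt ℝ 2 g x₀ := by
        exact ((hU.contDiffAt).add ((contDiffAt_const).mul
          (Real.contDiffAt_rpow_const_of_ne (ne_of_gt hx₀0)))).add
          ((contDiffAt_const).mul (Real.contDiffAt_rpow_const_of_ne (ne_of_gt hx₀0)))
      have hsd := secondDerivTest hcd hlocmin
      -- compute second derivative
      have hcomp := deriv2_g U hU1 hU2 M (δ - 1) (a - 3) a hx₀0
      rw [show a - 3 - 1 = a - 4 by ring, show a - 3 - 2 = a - 5 by ring] at hcomp
      -- deriv deriv U at x₀
      have hU0x : 0 < U x₀ := (hb x₀ hx₀0).1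
      have hUltx : U x₀ < x₀ ^ a := (hb x₀ hx₀0).2
      have hddU : deriv (deriv U) x₀ = U x₀ * (U x₀ ^ p - x₀) := by
        have h := heq x₀ (le_of_lt hx₀0)
        have hpw : U x₀ ^ (p + 1) = U x₀ ^ p * U x₀ := by
          rw [Real.rpow_add hU0x, Real.rpow_one]
        linear_combination -h + hpw
      -- q inequality
      have hqx := hq x₀ (le_trans hLL₁ (le_of_lt hx₀L))
      -- g x₀ < 0 gives bound on U x₀ - x₀ ^ a
      have hxa3 : (0:ℝ) < x₀ ^ (a - 3) := Real.rpow_pos_of_pos hx₀0 _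
      have hxaa : (0:ℝ) < x₀ ^ a := Real.rpow_pos_of_pos hx₀0 _
      have hwb : U x₀ - x₀ ^ a < -(M * x₀ ^ (a - 3) + δ * x₀ ^ a) := by
        have : g x₀ = (U x₀ - x₀ ^ a) + M * x₀ ^ (a - 3) + δ * x₀ ^ a := by
          simp only [hgdef]; ring
        linarith [this ▸ hgx₀]
      -- x₀ * x₀ ^ (a-3) = x₀ ^ (a-2)
      have hxpow : x₀ * x₀ ^ (a - 3) = x₀ ^ (a - 2) := by
        nth_rewrite 1 [← Real.rpow_one x₀]
        rw [← Real.rpow_add hx₀0, show 1 + (a - 3) = a - 2 by ring]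
      have hxpow2 : x₀ * x₀ ^ a = x₀ ^ (a + 1) := by
        nth_rewrite 1 [← Real.rpow_one x₀]
        rw [← Real.rpow_add hx₀0, show 1 + a = a + 1 by ring]
      have hxa1 : (0:ℝ) < x₀ ^ (a + 1) := Real.rpow_pos_of_pos hx₀0 _
      have hstep1 : U x₀ * (U x₀ ^ p - x₀) < -(M * x₀ ^ (a - 2)) := by
        have h1 : x₀ * (U x₀ - x₀ ^ a) < x₀ * (-(M * x₀ ^ (a - 3) + δ * x₀ ^ a)) :=
          mul_lt_mul_of_pos_left hwb hx₀0
        have h2 : x₀ * (-(M * x₀ ^ (a - 3) + δ * x₀ ^ a))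
            = -(M * x₀ ^ (a - 2)) - δ * x₀ ^ (a + 1) := by
          rw [← hxpow, ← hxpow2]; ring
        linarith [hqx, h1, h2, mul_pos hδ0 hxa1]
      -- the rpow splitting x₀^(a-2) = x₀^(a-5) * x₀^3
      have hxa5 : (0:ℝ) < x₀ ^ (a - 5) := Real.rpow_pos_of_pos hx₀0 _
      have hsplit : x₀ ^ (a - 2) = x₀ ^ (a - 5) * x₀ ^ (3:ℝ) := by
        rw [← Real.rpow_add hx₀0, show a - 5 + 3 = a - 2 by ring]
      have hcube : 2 * K ≤ x₀ ^ (3:ℝ) := by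
        have h3 : x₀ ^ (3:ℝ) = x₀ * x₀ * x₀ := by
          rw [show (3:ℝ) = ((3:ℕ):ℝ) by norm_num, Real.rpow_natCast]; ring
        rw [h3]
        nlinarith [le_trans hLK (le_of_lt hx₀L), mul_le_mul_of_nonneg_left hx₀1 hx₀0.le,
          mul_le_mul_of_nonneg_left hx₀1 (mul_nonneg hx₀0.le hx₀0.le)]
      -- assemble: deriv deriv g x₀ < 0
      have hxa2 : (0:ℝ) < x₀ ^ (a - 2) := Real.rpow_pos_of_pos hx₀0 _
      have hdc : (δ - 1) * (a * ((a - 1) * x₀ ^ (a - 2))) ≤ (-c) * x₀ ^ (a - 2) := by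
        have : (δ - 1) * (a * ((a - 1) * x₀ ^ (a - 2))) = ((δ - 1) * c) * x₀ ^ (a - 2) := by
          rw [hcdef]; ring
        rw [this]
        have h9 : (δ - 1) * c ≤ -c := by nlinarith
        exact mul_le_mul_of_nonneg_right h9 hxa2.le
      have hfinal : deriv (deriv fun x => U x + M * x ^ (a - 3) + (δ - 1) * x ^ a) x₀ < 0 := by
        rw [hcomp, hddU]
        have hMK : M * ((a - 3) * ((a - 4) * x₀ ^ (a - 5))) = M * K * x₀ ^ (a - 5) := by
          rw [hKdef]; ring
        have hdc2 : (δ - 1) * (a * ((a - 1) * x₀ ^ (a - 2))) = ((δ - 1) * c) * x₀ ^ (a - 2) := by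
          rw [hcdef]; ring
        rw [hMK, hdc2]
        exact arith_core hc hK hMc hδ0 hδ1 hxa5 hxa2 hsplit hcube hstep1
      rw [hgdef] at hsd
      linarith [hsd, hfinal]
    -- conclude
    intro x hx
    rcases le_total x R with h | h
    · exact hnoneg x ⟨hx, h⟩
    · exact hgR x h
  -- let δ → 0
  have hfin : ∀ x, L ≤ x → x ^ a - U x ≤ M * x ^ (a - 3) := by
    intro x hx
    have hx0 : (0:ℝ) < x := lt_of_lt_of_le hL0 hx
    have hxa : (0:ℝ) < x ^ a := Real.rpow_pos_of_pos hx0 _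
    by_contra hcon
    push_neg at hcon
    set T : ℝ := U x + M * x ^ (a - 3) - x ^ a with hT
    have hT0 : T < 0 := by simp only [hT]; linarith
    set δ : ℝ := min (1/2) (-T / (2 * x ^ a)) with hδ
    have hδ0 : 0 < δ := lt_min (by norm_num) (div_pos (by linarith) (by positivity))
    have hδ1 : δ < 1 := lt_of_le_of_lt (min_le_left _ _) (by norm_num)
    have h1 := key δ hδ0 hδ1 x hx
    have h2 : δ * x ^ a ≤ -T / 2 := by
      have h3 : δ ≤ -T / (2 * x ^ a) := min_le_right _ _
      have := mul_le_mul_of_nonneg_right h3 (le_of_lt hxa)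
      calc δ * x ^ a ≤ (-T / (2 * x ^ a)) * x ^ a := this
      _ = -T / 2 := by field_simp
    have h4 : U x + M * x ^ (a - 3) + (δ - 1) * x ^ a = T + δ * x ^ a := by
      simp only [hT]; ring
    linarith [h1, h4 ▸ h1]
  -- final packaging
  refine ⟨M, hM0, L, fun x hx => ?_⟩
  have hx0 : (0:ℝ) < x := lt_of_lt_of_le hL0 hx
  have hUx := hb x hx0
  have habs : |U x - x ^ a| = x ^ a - U x := by
    rw [abs_of_nonpos (by linarith [hUx.2])]; ring
  have hexp : (1 - 3 * p) / p = a - 3 := by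
    rw [ha]; field_simp
  rw [habs, hexp]
  exact hfin x hx
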